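/- arXiv:math/0502389 — 3 statements merged into one kernel-verified Lean document; each statement's English description precedes it below -/
import Mathlib

section
/- Let (K_{i(e)}, w_e, p_e)_{e∈E} be a contractive Markov system with average contracting rate 0 < a < 1 satisfying the standing assumptions, with generalized Markov measure M and coding map F. If the invariant Borel probability measure μ of the system is unique, then the pushforward of M under F equals μ, i.e. F_*M = μ. -/
open MeasureTheory Filter ENNReal

/-- The modulus of uniform continuity of a real-valued function on a
(pseudo)metric space, valued in `ℝ≥0∞`. -/
noncomputable def modulus {X : Type*} [PseudoMetricSpace X] (h : X → ℝ) (t : ℝ) : ℝ≥0∞ :=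
  ⨆ (x : X) (y : X) (_ : dist x y ≤ t), ENNReal.ofReal |h x - h y|

/-- A function is Dini-continuous if `∫_0^c φ(t)/t dt < ∞` for some `c > 0`,
where `φ` is its modulus of uniform continuity. -/
def DiniContinuous {X : Type*} [PseudoMetricSpace X] (h : X → ℝ) : Prop :=
  ∃ c > (0 : ℝ), ∫⁻ t in Set.Ioc (0 : ℝ) c, modulus h t / ENNReal.ofReal t < ⊤

/-- A Markov system on a metric space `K`, with vertex set `Fin N` and edge set `E`. -/
structure MarkovSystem (K : Type*) [MetricSpace K] [MeasurableSpace K]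
    (N : ℕ) (E : Type*) [Fintype E] where
  /-- initial vertex of an edge -/
  edgeI : E → Fin N
  /-- terminal vertex of an edge -/
  edgeT : E → Fin N
  /-- the partition `K_1, …, K_N` of `K` -/
  Ki : Fin N → Set K
  Ki_nonempty : ∀ v, (Ki v).Nonempty
  Ki_measurable : ∀ v, MeasurableSet (Ki v)
  Ki_disjoint : ∀ v v', v ≠ v' → Disjoint (Ki v) (Ki v')
  Ki_cover : ∀ x : K, ∃ v, x ∈ Ki v
  /-- the maps `w_e` -/
  w : E → K → K
  w_measurable : ∀ e, Measurable (w e)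
  w_mapsTo : ∀ e, Set.MapsTo (w e) (Ki (edgeI e)) (Ki (edgeT e))
  /-- the probability functions `p_e` -/
  p : E → K → ℝ
  p_measurable : ∀ e, Measurable (p e)
  p_nonneg : ∀ e x, 0 ≤ p e x
  p_sum_one : ∀ x : K, ∑ e, p e x = 1
  p_eq_zero : ∀ e, ∀ x : K, x ∉ Ki (edgeI e) → p e x = 0

namespace MarkovSystem

variable {K : Type*} [MetricSpace K] [MeasurableSpace K] {N : ℕ} {E : Type*} [Fintype E]

/-- Condition of contractiveness on average with rate `a`. -/
def ContractiveOnAvg (sys : MarkovSystem K N E) (a : ℝ) : Prop :=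
  ∀ v : Fin N, ∀ x ∈ sys.Ki v, ∀ y ∈ sys.Ki v,
    ∑ e, sys.p e x * dist (sys.w e x) (sys.w e y) ≤ a * dist x y

/-- `μ` is an invariant Borel probability measure of the Markov system:
`∫ Uf dμ = ∫ f dμ` for every bounded Borel measurable `f`. -/
def IsInvariant (sys : MarkovSystem K N E) (μ : Measure K) : Prop :=
  IsProbabilityMeasure μ ∧
  ∀ f : K → ℝ, Measurable f → (∃ B, ∀ x, |f x| ≤ B) →
    ∫ x, (∑ e, sys.p e x * f (sys.w e x)) ∂μ = ∫ x, f x ∂μ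

end MarkovSystem

/-- `wordProb w p (e₁ :: … :: eₖ) x = p_{e₁}(x) p_{e₂}(w_{e₁}x) ⋯ p_{eₖ}(w_{e_{k-1}} ∘ ⋯ ∘ w_{e₁}x)`. -/
def wordProb {K E : Type*} (w : E → K → K) (p : E → K → ℝ) : List E → K → ℝ
  | [], _ => 1
  | e :: l, x => p e x * wordProb w p l (w e x)

/-- `wordMap w (e₁ :: … :: eₖ) = w_{eₖ} ∘ ⋯ ∘ w_{e₁}`. -/
def wordMap {K E : Type*} (w : E → K → K) : List E → K → K
  | [], x => x
  | e :: l, x => wordMap w l (w e x)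

/-- `M` is the generalized Markov measure on `Σ = E^ℤ` associated with the Markov
system and the invariant measure `μ`. -/
def IsMarkovMeasure {K : Type*} [MetricSpace K] [MeasurableSpace K] {N : ℕ}
    {E : Type*} [Fintype E] [MeasurableSpace E]
    (sys : MarkovSystem K N E) (μ : Measure K) (M : Measure (ℤ → E)) : Prop :=
  IsProbabilityMeasure M ∧
  ∀ (m : ℤ) (es : List E),
    M {σ : ℤ → E | ∀ j : Fin es.length, σ (m + (j : ℕ)) = es.get j}
      = ENNReal.ofReal (∫ x, wordProb sys.w sys.p es x ∂μ)

/-- The left shift on `E^ℤ`. -/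
def shift {E : Type*} (σ : ℤ → E) : ℤ → E := fun k => σ (k + 1)

/-- `comps w σ m = w_{σ₀} ∘ w_{σ₋₁} ∘ ⋯ ∘ w_{σ₋ₘ}`. -/
def comps {K E : Type*} (w : E → K → K) (σ : ℤ → E) : ℕ → K → K
  | 0 => w (σ 0)
  | n + 1 => fun x => comps w σ n (w (σ (-((n : ℤ) + 1))) x)

/-- `F` is the coding map of the contractive Markov system:
`F(σ) = lim_{m → -∞} w_{σ₀} ∘ ⋯ ∘ w_{σₘ} x_{i(σₘ)}` for `M`-a.e. `σ`. -/
def IsCodingMap {K : Type*} [MetricSpace K] [MeasurableSpace K] {N : ℕ}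
    {E : Type*} [Fintype E] [MeasurableSpace E]
    (sys : MarkovSystem K N E) (M : Measure (ℤ → E)) (F : (ℤ → E) → K) : Prop :=
  Measurable F ∧ ∃ xs : Fin N → K, (∀ v, xs v ∈ sys.Ki v) ∧
    ∀ᵐ σ ∂M, Filter.Tendsto
      (fun m : ℕ => comps sys.w σ m (xs (sys.edgeI (σ (-(m : ℤ))))))
      Filter.atTop (nhds (F σ))

/-- Entropy of the finite measurable partition given by the fibers of `π`. -/
noncomputable def partEntropy {Ω : Type*} [MeasurableSpace Ω] (M : Measure Ω)
    {F : Type*} [Fintype F] (π : Ω → F) : ℝ :=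
  -∑ f : F, ((M (π ⁻¹' {f})).toReal * Real.log (M (π ⁻¹' {f})).toReal)

/-- The Kolmogorov–Sinai entropy of a measure-preserving transformation `S`
with respect to `M`: the supremum over all finite measurable partitions `π` of
`inf_n (1/n) H(⋁_{i=0}^{n-1} S^{-i} π)`. -/
noncomputable def ksEntropy {Ω : Type*} [MeasurableSpace Ω] (M : Measure Ω) (S : Ω → Ω) : ℝ≥0∞ :=
  ⨆ (k : ℕ) (π : Ω → Fin k) (_ : ∀ j, MeasurableSet (π ⁻¹' {j})),
    ⨅ n : ℕ, ENNReal.ofReal (((n : ℝ) + 1)⁻¹ *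
      partEntropy M (fun ω => fun j : Fin (n + 1) => π (S^[(j : ℕ)] ω)))

set_option linter.unusedSectionVars false
section Aux

variable {K : Type*} [MetricSpace K] [MeasurableSpace K]
  {N : ℕ} {E : Type*} [Fintype E]

private lemma ofFn_cons {m : ℕ} (e : E) (s : Fin m → E) :
    List.ofFn (Fin.cons e s) = e :: List.ofFn s := by
  rw [List.ofFn_succ]; simp

private lemma pi_succ_sum {m : ℕ} (g : (Fin (m+1) → E) → ℝ) :
    ∑ t : Fin (m+1) → E, g t = ∑ e : E, ∑ s : Fin m → E, g (Fin.cons e s) := by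
  rw [← (Fin.consEquiv fun _ : Fin (m+1) => E).sum_comp g, Fintype.sum_prod_type]
  rfl

variable (sys : MarkovSystem K N E)

private lemma measurable_wordProb (l : List E) : Measurable (wordProb sys.w sys.p l) := by
  induction l with
  | nil => simp only [wordProb]; exact measurable_const
  | cons e l ih =>
    simp only [wordProb]
    exact (sys.p_measurable e).mul (ih.comp (sys.w_measurable e))

private lemma measurable_wordMap (l : List E) : Measurable (wordMap sys.w l) := by
  induction l with
  | nil => simpa only [wordMap] using measurable_id'
  | cons e l ih =>
    simp only [wordMap]
    exact ih.comp (sys.w_measurable e)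

private lemma wordProb_nonneg (l : List E) (x : K) : 0 ≤ wordProb sys.w sys.p l x := by
  induction l generalizing x with
  | nil => simp [wordProb]
  | cons e l ih => exact mul_nonneg (sys.p_nonneg e x) (ih _)

private lemma p_le_one (e : E) (x : K) : sys.p e x ≤ 1 := by
  have h := sys.p_sum_one x
  calc sys.p e x ≤ ∑ e', sys.p e' x :=
        Finset.single_le_sum (fun e' _ => sys.p_nonneg e' x) (Finset.mem_univ e)
    _ = 1 := h

private lemma wordProb_le_one (l : List E) (x : K) : wordProb sys.w sys.p l x ≤ 1 := by
  induction l generalizing x with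
  | nil => simp [wordProb]
  | cons e l ih =>
    simp only [wordProb]
    exact mul_le_one₀ (p_le_one sys e x) (wordProb_nonneg sys l _) (ih _)

private lemma sum_wordProb (m : ℕ) (x : K) :
    ∑ t : Fin m → E, wordProb sys.w sys.p (List.ofFn t) x = 1 := by
  induction m generalizing x with
  | zero => simp [wordProb]
  | succ m ih =>
    rw [pi_succ_sum]
    simp only [ofFn_cons, wordProb, ← Finset.mul_sum, ih, mul_one]
    exact sys.p_sum_one x
private lemma mem_Ki_of_p_ne_zero {e : E} {x : K} (h : sys.p e x ≠ 0) :
    x ∈ sys.Ki (sys.edgeI e) := by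
  by_contra hx
  exact h (sys.p_eq_zero e x hx)

private lemma edgeI_eq_of_p_ne_zero {e : E} {x : K} {v : Fin N} (hv : x ∈ sys.Ki v)
    (h : sys.p e x ≠ 0) : sys.edgeI e = v := by
  by_contra hne
  exact (Set.disjoint_left.mp (sys.Ki_disjoint _ _ hne) (mem_Ki_of_p_ne_zero sys h)) hv

private lemma sum_wordProb_dist {a : ℝ} (ha0 : 0 ≤ a) (hcontr : sys.ContractiveOnAvg a)
    (m : ℕ) : ∀ (v : Fin N), ∀ x ∈ sys.Ki v, ∀ y ∈ sys.Ki v,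
    ∑ t : Fin m → E, wordProb sys.w sys.p (List.ofFn t) x *
      dist (wordMap sys.w (List.ofFn t) x) (wordMap sys.w (List.ofFn t) y)
      ≤ a ^ m * dist x y := by
  induction m with
  | zero => intro v x hx y hy; simp [wordProb, wordMap]
  | succ m ih =>
    intro v x hx y hy
    rw [pi_succ_sum]
    have hstep : ∀ e : E,
        ∑ s : Fin m → E, wordProb sys.w sys.p (List.ofFn (Fin.cons e s)) x *
          dist (wordMap sys.w (List.ofFn (Fin.cons e s)) x)
               (wordMap sys.w (List.ofFn (Fin.cons e s)) y)
        ≤ sys.p e x * (a ^ m * dist (sys.w e x) (sys.w e y)) := by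
      intro e
      simp only [ofFn_cons, wordProb, wordMap, mul_assoc]
      rw [← Finset.mul_sum]
      by_cases hp : sys.p e x = 0
      · simp [hp]
      · refine mul_le_mul_of_nonneg_left ?_ (sys.p_nonneg e x)
        have hxe : x ∈ sys.Ki (sys.edgeI e) := mem_Ki_of_p_ne_zero sys hp
        have hye : y ∈ sys.Ki (sys.edgeI e) := by
          rwa [edgeI_eq_of_p_ne_zero sys hx hp]
        exact ih (sys.edgeT e) _ (sys.w_mapsTo e hxe) _ (sys.w_mapsTo e hye)
    calc ∑ e : E, ∑ s : Fin m → E, wordProb sys.w sys.p (List.ofFn (Fin.cons e s)) x *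
          dist (wordMap sys.w (List.ofFn (Fin.cons e s)) x)
               (wordMap sys.w (List.ofFn (Fin.cons e s)) y)
        ≤ ∑ e : E, sys.p e x * (a ^ m * dist (sys.w e x) (sys.w e y)) :=
          Finset.sum_le_sum fun e _ => hstep e
      _ = a ^ m * ∑ e : E, sys.p e x * dist (sys.w e x) (sys.w e y) := by
          rw [Finset.mul_sum]; congr 1; ext e; ring
      _ ≤ a ^ m * (a * dist x y) := by
          refine mul_le_mul_of_nonneg_left ?_ (pow_nonneg ha0 m)
          exact hcontr v x hx y hy
      _ = a ^ (m + 1) * dist x y := by ring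

private lemma integrable_of_bound {α : Type*} [MeasurableSpace α] (ν : Measure α)
    [IsFiniteMeasure ν] (f : α → ℝ) (hf : AEStronglyMeasurable f ν) (B : ℝ)
    (hB : ∀ x, |f x| ≤ B) : Integrable f ν :=
  (integrable_const B).mono' hf (Filter.Eventually.of_forall fun x => by
    simpa [Real.norm_eq_abs] using hB x)

private lemma integral_sum_wordProb (μ : Measure K) (hμ : sys.IsInvariant μ)
    [BorelSpace K]
    (f : K → ℝ) (hf : Measurable f) (B : ℝ) (hB : ∀ x, |f x| ≤ B) (m : ℕ) :
    ∫ x, (∑ t : Fin m → E, wordProb sys.w sys.p (List.ofFn t) x *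
        f (wordMap sys.w (List.ofFn t) x)) ∂μ = ∫ x, f x ∂μ := by
  induction m with
  | zero => simp [wordProb, wordMap]
  | succ m ih =>
    set g : K → ℝ := fun x => ∑ t : Fin m → E, wordProb sys.w sys.p (List.ofFn t) x *
        f (wordMap sys.w (List.ofFn t) x) with hg
    have hgmeas : Measurable g := by
      apply Finset.measurable_sum
      intro t _
      exact (measurable_wordProb sys _).mul (hf.comp (measurable_wordMap sys _))
    have hgbound : ∀ x, |g x| ≤ |B| := by
      intro x
      calc |g x| ≤ ∑ t : Fin m → E, |wordProb sys.w sys.p (List.ofFn t) x *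
            f (wordMap sys.w (List.ofFn t) x)| := Finset.abs_sum_le_sum_abs _ _
        _ ≤ ∑ t : Fin m → E, wordProb sys.w sys.p (List.ofFn t) x * |B| := by
            refine Finset.sum_le_sum fun t _ => ?_
            rw [abs_mul, abs_of_nonneg (wordProb_nonneg sys _ _)]
            refine mul_le_mul_of_nonneg_left ?_ (wordProb_nonneg sys _ _)
            exact (hB _).trans (le_abs_self B)
        _ = |B| := by rw [← Finset.sum_mul, sum_wordProb, one_mul]
    have hdec : ∀ x, (∑ t : Fin (m+1) → E, wordProb sys.w sys.p (List.ofFn t) x *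
        f (wordMap sys.w (List.ofFn t) x)) = ∑ e, sys.p e x * g (sys.w e x) := by
      intro x
      rw [pi_succ_sum]
      refine Finset.sum_congr rfl fun e _ => ?_
      simp only [ofFn_cons, wordProb, wordMap, hg, Finset.mul_sum, mul_assoc]
    calc ∫ x, (∑ t : Fin (m+1) → E, wordProb sys.w sys.p (List.ofFn t) x *
          f (wordMap sys.w (List.ofFn t) x)) ∂μ
        = ∫ x, (∑ e, sys.p e x * g (sys.w e x)) ∂μ := by
          congr 1; ext x; exact hdec x
      _ = ∫ x, g x ∂μ := hμ.2 g hgmeas ⟨|B|, hgbound⟩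
      _ = ∫ x, f x ∂μ := ih

private lemma abs_sum_wordProb_mul_le (n : ℕ) (x : K) (ψ : (Fin n → E) → ℝ) (C : ℝ)
    (hψ : ∀ t, |ψ t| ≤ C) :
    |∑ t : Fin n → E, wordProb sys.w sys.p (List.ofFn t) x * ψ t| ≤ C := by
  calc |∑ t : Fin n → E, wordProb sys.w sys.p (List.ofFn t) x * ψ t|
      ≤ ∑ t : Fin n → E, |wordProb sys.w sys.p (List.ofFn t) x * ψ t| :=
        Finset.abs_sum_le_sum_abs _ _
    _ ≤ ∑ t : Fin n → E, wordProb sys.w sys.p (List.ofFn t) x * C := by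
        refine Finset.sum_le_sum fun t _ => ?_
        rw [abs_mul, abs_of_nonneg (wordProb_nonneg sys _ _)]
        exact mul_le_mul_of_nonneg_left (hψ t) (wordProb_nonneg sys _ _)
    _ = C := by rw [← Finset.sum_mul, sum_wordProb, one_mul]

private lemma comps_eq (w : E → K → K) (σ : ℤ → E) :
    ∀ (m : ℕ) (x : K), comps w σ m x
      = wordMap w (List.ofFn fun j : Fin (m+1) => σ (-(m:ℤ) + (j : ℕ))) x := by
  intro m
  induction m with
  | zero => intro x; simp [comps, wordMap, List.ofFn_succ]
  | succ m ih =>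
    intro x
    have h0 : -((m+1 : ℕ) : ℤ) + (((0 : Fin (m+2)) : ℕ) : ℤ) = -((m : ℤ) + 1) := by
      push_cast [Fin.val_zero]; ring
    have hsucc : ∀ j : Fin (m+1),
        -((m+1 : ℕ) : ℤ) + ((((j.succ : Fin (m+2)) : ℕ) : ℤ)) = -(m:ℤ) + (j : ℕ) := by
      intro j; push_cast [Fin.val_succ]; ring
    have hlist : (List.ofFn fun j : Fin (m+2) => σ (-((m+1 : ℕ) : ℤ) + (j : ℕ)))
        = σ (-((m : ℤ) + 1)) :: List.ofFn fun j : Fin (m+1) => σ (-(m:ℤ) + (j : ℕ)) := by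
      rw [List.ofFn_succ]
      exact congrArg₂ List.cons (congrArg σ h0)
        (congrArg List.ofFn (funext fun j => congrArg σ (hsucc j)))
    rw [hlist]
    show comps w σ (m+1) x = wordMap w _ (w (σ (-((m:ℤ)+1))) x)
    rw [show comps w σ (m+1) x = comps w σ m (w (σ (-((m:ℤ)+1))) x) from rfl]
    exact ih _

end Aux

section Cyl

set_option linter.unusedSectionVars false

variable {K : Type*} [MetricSpace K] [MeasurableSpace K]
  {N : ℕ} {E : Type*} [Fintype E] [MeasurableSpace E] [MeasurableSingletonClass E]

/-- The cylinder set of sequences matching `t` on positions `-m, …, 0`. -/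
private def cylSet (m : ℕ) (t : Fin (m+1) → E) : Set (ℤ → E) :=
  {σ | ∀ j : Fin (m+1), σ (-(m:ℤ) + (j : ℕ)) = t j}

private lemma measurableSet_cylSet (m : ℕ) (t : Fin (m+1) → E) :
    MeasurableSet (cylSet m t) := by
  have : cylSet m t = ⋂ j : Fin (m+1), (fun σ : ℤ → E => σ (-(m:ℤ) + (j : ℕ))) ⁻¹' {t j} := by
    ext σ; simp [cylSet]
  rw [this]
  exact MeasurableSet.iInter fun j =>
    (measurable_pi_apply _) (measurableSet_singleton (t j))

private lemma comp_proj_eq_sum_indicator (m : ℕ) (c : (Fin (m+1) → E) → ℝ) (σ : ℤ → E) :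
    c (fun j => σ (-(m:ℤ) + (j : ℕ)))
      = ∑ t : Fin (m+1) → E, (cylSet m t).indicator (fun _ => c t) σ := by
  rw [Finset.sum_eq_single (fun j : Fin (m+1) => σ (-(m:ℤ) + (j : ℕ)))]
  · have hmem : σ ∈ cylSet m (fun j : Fin (m+1) => σ (-(m:ℤ) + (j : ℕ))) := fun j => rfl
    exact (Set.indicator_of_mem hmem (fun _ => c (fun j : Fin (m+1) => σ (-(m:ℤ) + (j : ℕ))))).symm
  · intro t _ ht
    refine Set.indicator_of_notMem (fun hσ => ht ?_) _
    have hσ' : ∀ j : Fin (m+1), σ (-(m:ℤ) + (j : ℕ)) = t j := hσ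
    exact funext fun j => (hσ' j).symm
  · intro h; exact absurd (Finset.mem_univ _) h

private lemma measurable_comp_proj (m : ℕ) (c : (Fin (m+1) → E) → ℝ) :
    Measurable (fun σ : ℤ → E => c (fun j => σ (-(m:ℤ) + (j : ℕ)))) := by
  rw [show (fun σ : ℤ → E => c (fun j => σ (-(m:ℤ) + (j : ℕ))))
      = fun σ => ∑ t : Fin (m+1) → E, (cylSet m t).indicator (fun _ => c t) σ
      from funext (comp_proj_eq_sum_indicator m c)]
  exact Finset.measurable_sum _ fun t _ =>
    measurable_const.indicator (measurableSet_cylSet m t)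

open MeasureTheory in
private lemma integral_comp_proj (M : Measure (ℤ → E)) [IsFiniteMeasure M]
    (m : ℕ) (c : (Fin (m+1) → E) → ℝ) :
    ∫ σ, c (fun j => σ (-(m:ℤ) + (j : ℕ))) ∂M
      = ∑ t : Fin (m+1) → E, (M (cylSet m t)).toReal * c t := by
  rw [show (fun σ : ℤ → E => c (fun j => σ (-(m:ℤ) + (j : ℕ))))
      = fun σ => ∑ t : Fin (m+1) → E, (cylSet m t).indicator (fun _ => c t) σ
      from funext (comp_proj_eq_sum_indicator m c)]
  rw [integral_finset_sum _ fun t _ =>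
    (integrable_const (c t)).indicator (measurableSet_cylSet m t)]
  refine Finset.sum_congr rfl fun t _ => ?_
  rw [integral_indicator_const (c t) (measurableSet_cylSet m t), smul_eq_mul, measureReal_def]

private lemma measure_cylSet (sys : MarkovSystem K N E) (μ : Measure K)
    (M : Measure (ℤ → E)) (hM : IsMarkovMeasure sys μ M) (m : ℕ) (t : Fin (m+1) → E) :
    M (cylSet m t) = ENNReal.ofReal (∫ x, wordProb sys.w sys.p (List.ofFn t) x ∂μ) := by
  rw [← hM.2 (-(m:ℤ)) (List.ofFn t)]
  congr 1
  ext σ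
  simp only [cylSet, Set.mem_setOf_eq, List.get_ofFn]
  rw [Fin.forall_iff, Fin.forall_iff]
  simp [List.length_ofFn]

end Cyl


section Key

set_option linter.unusedSectionVars false

open MeasureTheory Filter

variable {K : Type*} [MetricSpace K] [MeasurableSpace K] [BorelSpace K]
  {N : ℕ} {E : Type*} [Fintype E] [MeasurableSpace E] [MeasurableSingletonClass E]

private lemma integral_f_comp_F (sys : MarkovSystem K N E) {a : ℝ}
    (ha0 : 0 < a) (ha1 : a < 1) (hcontr : sys.ContractiveOnAvg a)
    (μ : Measure K) (hμ : sys.IsInvariant μ)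
    (M : Measure (ℤ → E)) (hM : IsMarkovMeasure sys μ M)
    (F : (ℤ → E) → K) (xs : Fin N → K) (hxs : ∀ v, xs v ∈ sys.Ki v)
    (htend : ∀ᵐ σ ∂M, Tendsto
      (fun m : ℕ => comps sys.w σ m (xs (sys.edgeI (σ (-(m : ℤ))))))
      atTop (nhds (F σ)))
    (L : NNReal) (f : K → ℝ) (hf : LipschitzWith L f) (B : ℝ) (hB : ∀ x, |f x| ≤ B) :
    ∫ σ, f (F σ) ∂M = ∫ x, f x ∂μ := by
  haveI : IsProbabilityMeasure μ := hμ.1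
  haveI : IsProbabilityMeasure M := hM.1
  have hfm : Measurable f := hf.continuous.measurable
  set c : ∀ m : ℕ, (Fin (m+1) → E) → ℝ :=
    fun m t => f (wordMap sys.w (List.ofFn t) (xs (sys.edgeI (t 0)))) with hc
  set I : ℕ → ℝ := fun m => ∑ t : Fin (m+1) → E,
    (∫ x, wordProb sys.w sys.p (List.ofFn t) x ∂μ) * c m t with hI
  -- rewrite the approximants through the projection to coordinates -m..0
  have hrw : ∀ (m : ℕ) (σ : ℤ → E),
      f (comps sys.w σ m (xs (sys.edgeI (σ (-(m : ℤ))))))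
        = c m (fun j : Fin (m+1) => σ (-(m:ℤ) + (j : ℕ))) := by
    intro m σ
    rw [comps_eq]
    have h0 : -(m:ℤ) + (((0 : Fin (m+1)) : ℕ) : ℤ) = -(m:ℤ) := by
      push_cast [Fin.val_zero]; ring
    simp only [hc, h0]
  have hgint : ∀ m : ℕ,
      ∫ σ, f (comps sys.w σ m (xs (sys.edgeI (σ (-(m : ℤ)))))) ∂M = I m := by
    intro m
    calc ∫ σ, f (comps sys.w σ m (xs (sys.edgeI (σ (-(m : ℤ)))))) ∂M
        = ∫ σ, c m (fun j : Fin (m+1) => σ (-(m:ℤ) + (j : ℕ))) ∂M := by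
          exact integral_congr_ae (Filter.Eventually.of_forall fun σ => hrw m σ)
      _ = ∑ t : Fin (m+1) → E, (M (cylSet m t)).toReal * c m t :=
          integral_comp_proj M m (c m)
      _ = I m := by
          refine Finset.sum_congr rfl fun t _ => ?_
          rw [measure_cylSet sys μ M hM m t,
            ENNReal.toReal_ofReal (integral_nonneg fun x => wordProb_nonneg sys _ x)]
  -- convergence of the approximants to ∫ f (F σ) dM
  have h1 : Tendsto (fun m : ℕ => ∫ σ, f (comps sys.w σ m (xs (sys.edgeI (σ (-(m : ℤ)))))) ∂M)
      atTop (nhds (∫ σ, f (F σ) ∂M)) := by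
    refine tendsto_integral_of_dominated_convergence (fun _ => |B|) ?_ (integrable_const _) ?_ ?_
    · intro m
      have : Measurable fun σ : ℤ → E =>
          f (comps sys.w σ m (xs (sys.edgeI (σ (-(m : ℤ)))))) := by
        rw [show (fun σ : ℤ → E => f (comps sys.w σ m (xs (sys.edgeI (σ (-(m : ℤ)))))))
          = fun σ => c m (fun j : Fin (m+1) => σ (-(m:ℤ) + (j : ℕ)))
          from funext fun σ => hrw m σ]
        exact measurable_comp_proj m (c m)
      exact this.aestronglyMeasurable
    · intro m
      exact Filter.Eventually.of_forall fun σ => by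
        simpa [Real.norm_eq_abs] using (hB _).trans (le_abs_self B)
    · exact htend.mono fun σ hσ => (hf.continuous.tendsto (F σ)).comp hσ
  have h1' : Tendsto I atTop (nhds (∫ σ, f (F σ) ∂M)) := h1.congr hgint
  -- convergence of the approximants to ∫ f dμ
  set h : ℕ → K → ℝ := fun m x => ∑ t : Fin (m+1) → E,
    wordProb sys.w sys.p (List.ofFn t) x *
      (f (wordMap sys.w (List.ofFn t) x) - c m t) with hh
  have hwpint : ∀ (n : ℕ) (t : Fin n → E),
      Integrable (fun x => wordProb sys.w sys.p (List.ofFn t) x) μ := by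
    intro n t
    refine integrable_of_bound μ _ (measurable_wordProb sys _).aestronglyMeasurable 1 fun x => ?_
    rw [abs_of_nonneg (wordProb_nonneg sys _ x)]
    exact wordProb_le_one sys _ x
  have hmeash : ∀ m, Measurable (h m) := by
    intro m
    refine Finset.measurable_sum _ fun t _ => (measurable_wordProb sys _).mul ?_
    exact (hfm.comp (measurable_wordMap sys _)).sub measurable_const
  have hcbound : ∀ (m : ℕ) (t : Fin (m+1) → E), |c m t| ≤ B := fun m t => hB _
  have hint : ∀ m, ∫ x, h m x ∂μ = (∫ x, f x ∂μ) - I m := by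
    intro m
    have hA : Integrable (fun x => ∑ t : Fin (m+1) → E,
        wordProb sys.w sys.p (List.ofFn t) x * f (wordMap sys.w (List.ofFn t) x)) μ := by
      refine integrable_of_bound μ _ ?_ |B| fun x => ?_
      · exact (Finset.measurable_sum _ fun t _ => (measurable_wordProb sys _).mul
          (hfm.comp (measurable_wordMap sys _))).aestronglyMeasurable
      · exact abs_sum_wordProb_mul_le sys _ x _ |B| fun t => (hB _).trans (le_abs_self B)
    have hBint : Integrable (fun x => ∑ t : Fin (m+1) → E,
        wordProb sys.w sys.p (List.ofFn t) x * c m t) μ :=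
      integrable_finset_sum _ fun t _ => (hwpint _ t).mul_const (c m t)
    have hsplit : ∀ x, h m x
        = (∑ t : Fin (m+1) → E, wordProb sys.w sys.p (List.ofFn t) x *
            f (wordMap sys.w (List.ofFn t) x))
          - ∑ t : Fin (m+1) → E, wordProb sys.w sys.p (List.ofFn t) x * c m t := by
      intro x
      rw [hh, ← Finset.sum_sub_distrib]
      exact Finset.sum_congr rfl fun t _ => by ring
    calc ∫ x, h m x ∂μ
        = ∫ x, ((∑ t : Fin (m+1) → E, wordProb sys.w sys.p (List.ofFn t) x *
            f (wordMap sys.w (List.ofFn t) x))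
          - ∑ t : Fin (m+1) → E, wordProb sys.w sys.p (List.ofFn t) x * c m t) ∂μ :=
          integral_congr_ae (Filter.Eventually.of_forall hsplit)
      _ = (∫ x, f x ∂μ) - I m := by
          rw [integral_sub hA hBint,
            integral_sum_wordProb sys μ hμ f hfm B hB (m+1),
            integral_finset_sum _ fun t _ => (hwpint _ t).mul_const (c m t)]
          congr 1
          exact Finset.sum_congr rfl fun t _ => integral_mul_const _ _
  have hto0 : Tendsto (fun m => ∫ x, h m x ∂μ) atTop (nhds 0) := by
    have := tendsto_integral_of_dominated_convergence (μ := μ)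
      (F := h) (f := fun _ => (0:ℝ)) (fun _ => |B| + |B|)
      (fun m => (hmeash m).aestronglyMeasurable) (integrable_const _)
      (fun m => Filter.Eventually.of_forall fun x => ?_) ?_
    · simpa using this
    · rw [Real.norm_eq_abs]
      refine abs_sum_wordProb_mul_le sys _ x _ (|B| + |B|) fun t => ?_
      calc |f (wordMap sys.w (List.ofFn t) x) - c m t|
          ≤ |f (wordMap sys.w (List.ofFn t) x)| + |c m t| := abs_sub _ _
        _ ≤ |B| + |B| := add_le_add ((hB _).trans (le_abs_self B))
            ((hcbound m t).trans (le_abs_self B))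
    · refine Filter.Eventually.of_forall fun x => ?_
      obtain ⟨v, hv⟩ := sys.Ki_cover x
      refine squeeze_zero_norm (a := fun m => (L : ℝ) * (a ^ (m+1) * dist x (xs v))) (fun m => ?_) ?_
      · show ‖h m x‖ ≤ (L : ℝ) * (a ^ (m+1) * dist x (xs v))
        have hterm : ∀ t : Fin (m+1) → E,
            |wordProb sys.w sys.p (List.ofFn t) x * (f (wordMap sys.w (List.ofFn t) x) - c m t)|
            ≤ wordProb sys.w sys.p (List.ofFn t) x *
              ((L : ℝ) * dist (wordMap sys.w (List.ofFn t) x)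
                (wordMap sys.w (List.ofFn t) (xs v))) := by
          intro t
          by_cases hwp : wordProb sys.w sys.p (List.ofFn t) x = 0
          · rw [hwp]; simp
          · have hp0 : sys.p (t 0) x ≠ 0 := by
              rw [List.ofFn_succ] at hwp
              simp only [wordProb] at hwp
              exact left_ne_zero_of_mul hwp
            have hedge : sys.edgeI (t 0) = v := edgeI_eq_of_p_ne_zero sys hv hp0
            have hct : c m t = f (wordMap sys.w (List.ofFn t) (xs v)) := by
              show f (wordMap sys.w (List.ofFn t) (xs (sys.edgeI (t 0)))) = _
              rw [hedge]
            rw [abs_mul, abs_of_nonneg (wordProb_nonneg sys _ x), hct]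
            refine mul_le_mul_of_nonneg_left ?_ (wordProb_nonneg sys _ x)
            rw [← Real.dist_eq]
            exact hf.dist_le_mul _ _
        calc ‖h m x‖ ≤ ∑ t : Fin (m+1) → E,
              |wordProb sys.w sys.p (List.ofFn t) x *
                (f (wordMap sys.w (List.ofFn t) x) - c m t)| := by
              rw [Real.norm_eq_abs, hh]; exact Finset.abs_sum_le_sum_abs _ _
          _ ≤ ∑ t : Fin (m+1) → E, wordProb sys.w sys.p (List.ofFn t) x *
              ((L : ℝ) * dist (wordMap sys.w (List.ofFn t) x)
                (wordMap sys.w (List.ofFn t) (xs v))) :=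
              Finset.sum_le_sum fun t _ => hterm t
          _ = (L : ℝ) * ∑ t : Fin (m+1) → E, wordProb sys.w sys.p (List.ofFn t) x *
              dist (wordMap sys.w (List.ofFn t) x) (wordMap sys.w (List.ofFn t) (xs v)) := by
              rw [Finset.mul_sum]; exact Finset.sum_congr rfl fun t _ => by ring
          _ ≤ (L : ℝ) * (a ^ (m+1) * dist x (xs v)) :=
              mul_le_mul_of_nonneg_left

                (sum_wordProb_dist sys ha0.le hcontr (m+1) v x hv (xs v) (hxs v)) L.2
      · have hpow : Tendsto (fun m : ℕ => a ^ (m+1)) atTop (nhds 0) :=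
          (tendsto_pow_atTop_nhds_zero_of_lt_one ha0.le ha1).comp (tendsto_add_atTop_nat 1)
        have := hpow.const_mul ((L : ℝ) * dist x (xs v))
        rw [mul_zero] at this
        exact this.congr fun m => by ring
  have h2 : Tendsto I atTop (nhds (∫ x, f x ∂μ)) := by
    have := (tendsto_const_nhds (x := ∫ x, f x ∂μ) (f := atTop (α := ℕ))).sub hto0
    rw [sub_zero] at this
    exact this.congr fun m => by rw [hint m]; ring
  exact tendsto_nhds_unique h1' h2

end Key

section Final

set_option linter.unusedSectionVars false

open MeasureTheory Filter Metric

variable {K : Type*} [MetricSpace K] [MeasurableSpace K] [BorelSpace K]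

private lemma lipschitz_aux (C : Set K) (n : ℕ) :
    LipschitzWith (n : NNReal) fun x : K => max (1 - (n : ℝ) * Metric.infDist x C) 0 := by
  refine LipschitzWith.of_dist_le_mul fun x y => ?_
  have h1 : dist (Metric.infDist x C) (Metric.infDist y C) ≤ dist x y := by
    simpa using (Metric.lipschitz_infDist_pt C).dist_le_mul x y
  have h2 : (((n : NNReal) : ℝ)) = (n : ℝ) := by norm_cast
  rw [h2]
  calc dist (max (1 - (n : ℝ) * Metric.infDist x C) 0) (max (1 - (n : ℝ) * Metric.infDist y C) 0)
      ≤ dist (1 - (n : ℝ) * Metric.infDist x C) (1 - (n : ℝ) * Metric.infDist y C) := by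
        rw [Real.dist_eq, Real.dist_eq]
        exact abs_max_sub_max_le_abs _ _ _
    _ = (n : ℝ) * dist (Metric.infDist x C) (Metric.infDist y C) := by
        rw [Real.dist_eq, Real.dist_eq,
          show (1 - (n : ℝ) * Metric.infDist x C) - (1 - (n : ℝ) * Metric.infDist y C)
            = (n : ℝ) * (Metric.infDist y C - Metric.infDist x C) by ring,
          abs_mul, abs_of_nonneg (by positivity : (0:ℝ) ≤ (n:ℝ)), abs_sub_comm]
    _ ≤ (n : ℝ) * dist x y := mul_le_mul_of_nonneg_left h1 (by positivity)

end Final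

/-- If the invariant probability measure of the contractive Markov system is
unique, then the coding map pushes the generalized Markov measure forward to it:
`F_*M = μ`. -/
theorem pushforward_of_markov_measure_eq_invariant
    {K : Type*} [MetricSpace K] [MeasurableSpace K] [BorelSpace K]
    {N : ℕ} {E : Type*} [Fintype E] [MeasurableSpace E] [MeasurableSingletonClass E]
    (sys : MarkovSystem K N E) (a : ℝ) (ha0 : 0 < a) (ha1 : a < 1)
    (hcontr : sys.ContractiveOnAvg a)
    (hrelcpt : ∀ s : Set K, Bornology.IsBounded s → IsCompact (closure s))
    (hopen : ∀ v, IsOpen (sys.Ki v))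
    (δ : ℝ) (hδpos : 0 < δ)
    (hδ : ∀ e, ∀ x ∈ sys.Ki (sys.edgeI e), δ ≤ sys.p e x)
    (hdini : ∀ e, DiniContinuous fun x : sys.Ki (sys.edgeI e) => sys.p e (x : K))
    (hsurj : Function.Surjective sys.edgeI)
    (μ : Measure K) (hμ : sys.IsInvariant μ)
    (huniq : ∀ ν : Measure K, sys.IsInvariant ν → ν = μ)
    (M : Measure (ℤ → E)) (hM : IsMarkovMeasure sys μ M)
    (F : (ℤ → E) → K) (hF : IsCodingMap sys M F) :
    Measure.map F M = μ := by
  obtain ⟨hFmeas, xs, hxs, htend⟩ := hF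
  haveI : IsProbabilityMeasure μ := hμ.1
  haveI : IsProbabilityMeasure M := hM.1
  haveI : IsProbabilityMeasure (Measure.map F M) :=
    Measure.isProbabilityMeasure_map hFmeas.aemeasurable
  have hkey : ∀ (L : NNReal) (f : K → ℝ), LipschitzWith L f → ∀ B : ℝ, (∀ x, |f x| ≤ B) →
      ∫ x, f x ∂(Measure.map F M) = ∫ x, f x ∂μ := by
    intro L f hf B hB
    rw [integral_map hFmeas.aemeasurable hf.continuous.aestronglyMeasurable]
    exact integral_f_comp_F sys ha0 ha1 hcontr μ hμ M hM F xs hxs htend L f hf B hB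
  have hclosed : ∀ C : Set K, IsClosed C → Measure.map F M C = μ C := by
    intro C hC
    rcases Set.eq_empty_or_nonempty C with rfl | hCne
    · simp
    set g : ℕ → K → ℝ := fun n x => max (1 - (n : ℝ) * Metric.infDist x C) 0 with hg
    have hcont : ∀ n, Continuous (g n) :=
      fun n => (continuous_const.sub
        (continuous_const.mul (Metric.continuous_infDist_pt C))).max continuous_const
    have hbound : ∀ n x, |g n x| ≤ 1 := by
      intro n x
      rw [abs_of_nonneg (le_max_right _ _)]
      refine max_le ?_ zero_le_one
      have : 0 ≤ (n : ℝ) * Metric.infDist x C :=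
        mul_nonneg (by positivity) Metric.infDist_nonneg
      linarith
    have hptlim : ∀ x, Tendsto (fun n => g n x) atTop
        (nhds (Set.indicator C (fun _ => (1:ℝ)) x)) := by
      intro x
      by_cases hx : x ∈ C
      · have h0 : Metric.infDist x C = 0 := Metric.infDist_zero_of_mem hx
        have : ∀ n : ℕ, g n x = 1 := by
          intro n; simp [hg, h0]
        rw [Set.indicator_of_mem hx]
        simpa [this] using tendsto_const_nhds (x := (1:ℝ)) (f := atTop (α := ℕ))
      · have hd : 0 < Metric.infDist x C := (hC.notMem_iff_infDist_pos hCne).mp hx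
        have hev : ∀ᶠ n : ℕ in atTop, g n x = 0 := by
          filter_upwards [eventually_ge_atTop ⌈(1:ℝ) / Metric.infDist x C⌉₊] with n hn
          have h1 : (1:ℝ) / Metric.infDist x C ≤ (n : ℝ) :=
            le_trans (Nat.le_ceil _) (by exact_mod_cast hn)
          have h2 : (1:ℝ) ≤ (n : ℝ) * Metric.infDist x C := by
            rw [div_le_iff₀ hd] at h1; linarith
          simp only [hg]
          exact max_eq_right (by linarith)
        rw [Set.indicator_of_notMem hx]
        exact (tendsto_const_nhds (x := (0:ℝ))).congr' (hev.mono fun n hn => hn.symm)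
    have hDCT : ∀ (ν : Measure K), IsProbabilityMeasure ν →
        Tendsto (fun n => ∫ x, g n x ∂ν) atTop (nhds ((ν C).toReal)) := by
      intro ν hν
      have := tendsto_integral_of_dominated_convergence (μ := ν)
        (F := fun n x => g n x) (f := Set.indicator C (fun _ => (1:ℝ))) (fun _ => 1)
        (fun n => (hcont n).aestronglyMeasurable) (integrable_const _)
        (fun n => Filter.Eventually.of_forall fun x => by
          rw [Real.norm_eq_abs]; exact hbound n x)
        (Filter.Eventually.of_forall hptlim)
      rwa [integral_indicator_const (1:ℝ) hC.measurableSet, smul_eq_mul, mul_one] at this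
    have heq : ∀ n : ℕ, ∫ x, g n x ∂(Measure.map F M) = ∫ x, g n x ∂μ :=
      fun n => hkey (n : NNReal) (g n) (lipschitz_aux C n) 1 (hbound n)
    have h1 := hDCT (Measure.map F M) inferInstance
    have h2 := hDCT μ inferInstance
    have h3 : ((Measure.map F M) C).toReal = (μ C).toReal :=
      tendsto_nhds_unique ((h1.congr heq)) h2
    exact (ENNReal.toReal_eq_toReal_iff' (measure_ne_top _ _) (measure_ne_top _ _)).mp h3
  refine MeasureTheory.ext_of_generate_finite {s : Set K | IsClosed s}
    (BorelSpace.measurable_eq.trans borel_eq_generateFrom_isClosed) ?_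
    (fun s hs => hclosed s hs) ?_
  · intro s hs t ht _
    exact hs.inter ht
  · simp
end

section
/- Consider ℝ² with the ℓ¹-norm ‖·‖₁, the sets K₁ := {(x,y) ∈ ℝ² : y ≥ 1/2} and K₂ := {(x,y) ∈ ℝ² : y ≤ −1/2}, the maps w₁(x,y) := (−x/2 − 1, −3y/2 + 1/4), w₂(x,y) := (−3x/2 + 1, y/4 + 3/8), w₃(x,y) := (−|x|/2 + 1, −3y/2 − 1/4), w₄(x,y) := (3|x|/2 − 1, −y/4 + 3/8), and the probability functions p₁(x,y) := ((1/15)sin²‖(x,y)‖₁ + 53/105)·1_{K₁}(x,y), p₂(x,y) := ((1/15)cos²‖(x,y)‖₁ + 3/7)·1_{K₁}(x,y), p₃(x,y) := ((1/15)sin²‖(x,y)‖₁ + 53/105)·1_{K₂}(x,y), p₄(x,y) := ((1/15)cos²‖(x,y)‖₁ + 3/7)·1_{K₂}(x,y). Then for each i ∈ {1,2} and all u, v ∈ K_i, one has ∑_{e=1}^4 p_e(u) ‖w_e(u) − w_e(v)‖₁ ≤ (209/210) ‖u − v‖₁; i.e. this system satisfies the condition of contractiveness on average with average contracting rate 209/210.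 -/
open Real

/-- The ℓ¹-norm on ℝ². -/
noncomputable def l1norm (u : ℝ × ℝ) : ℝ := |u.1| + |u.2|

/-- `K₁ = {(x,y) : y ≥ 1/2}`. -/
def Kone : Set (ℝ × ℝ) := {u | 1 / 2 ≤ u.2}

/-- `K₂ = {(x,y) : y ≤ -1/2}`. -/
def Ktwo : Set (ℝ × ℝ) := {u | u.2 ≤ -(1 / 2)}

noncomputable def wOne (u : ℝ × ℝ) : ℝ × ℝ := (-(1 / 2) * u.1 - 1, -(3 / 2) * u.2 + 1 / 4)
noncomputable def wTwo (u : ℝ × ℝ) : ℝ × ℝ := (-(3 / 2) * u.1 + 1, (1 / 4) * u.2 + 3 / 8)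
noncomputable def wThree (u : ℝ × ℝ) : ℝ × ℝ := (-(1 / 2) * |u.1| + 1, -(3 / 2) * u.2 - 1 / 4)
noncomputable def wFour (u : ℝ × ℝ) : ℝ × ℝ := ((3 / 2) * |u.1| - 1, -(1 / 4) * u.2 + 3 / 8)

noncomputable def pOne (u : ℝ × ℝ) : ℝ :=
  Kone.indicator (fun v => (1 / 15) * Real.sin (l1norm v) ^ 2 + 53 / 105) u
noncomputable def pTwo (u : ℝ × ℝ) : ℝ :=
  Kone.indicator (fun v => (1 / 15) * Real.cos (l1norm v) ^ 2 + 3 / 7) u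
noncomputable def pThree (u : ℝ × ℝ) : ℝ :=
  Ktwo.indicator (fun v => (1 / 15) * Real.sin (l1norm v) ^ 2 + 53 / 105) u
noncomputable def pFour (u : ℝ × ℝ) : ℝ :=
  Ktwo.indicator (fun v => (1 / 15) * Real.cos (l1norm v) ^ 2 + 3 / 7) u

lemma key_aux (s a b : ℝ) (hs : 0 ≤ s) (hs1 : s ≤ 1) (ha : 0 ≤ a) (hb : 0 ≤ b) :
    (s / 15 + 53 / 105) * ((1/2) * a + (3/2) * b)
      + ((1 - s) / 15 + 3 / 7) * ((3/2) * a + (1/4) * b) ≤ 209 / 210 * (a + b) := by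
  nlinarith [mul_nonneg hs ha, mul_nonneg hs hb, mul_nonneg (sub_nonneg.2 hs1) hb,
    mul_nonneg (sub_nonneg.2 hs1) ha]

/-- The example system on `(ℝ², ‖·‖₁)` satisfies the condition of contractiveness
on average with average contracting rate `209/210`. -/
theorem example_CMS_contractiveness_on_average :
    ∀ u v : ℝ × ℝ, (u ∈ Kone ∧ v ∈ Kone) ∨ (u ∈ Ktwo ∧ v ∈ Ktwo) →
      pOne u * l1norm (wOne u - wOne v) + pTwo u * l1norm (wTwo u - wTwo v)
        + pThree u * l1norm (wThree u - wThree v) + pFour u * l1norm (wFour u - wFour v)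
          ≤ (209 / 210) * l1norm (u - v) := by
  rintro u v (⟨hu, hv⟩ | ⟨hu, hv⟩)
  · have hu' : u ∉ Ktwo := by
      simp only [Kone, Set.mem_setOf_eq] at hu
      simp only [Ktwo, Set.mem_setOf_eq]; linarith
    simp only [pOne, pTwo, pThree, pFour, Set.indicator_of_mem hu,
      Set.indicator_of_notMem hu', zero_mul, add_zero]
    set s := Real.sin (l1norm u) ^ 2 with hsdef
    have hsc : Real.cos (l1norm u) ^ 2 = 1 - s := by
      have := Real.sin_sq_add_cos_sq (l1norm u); linarith
    have hs0 : 0 ≤ s := sq_nonneg _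
    have hs1 : s ≤ 1 := by
      have := sq_nonneg (Real.cos (l1norm u)); linarith
    have h1 : l1norm (wOne u - wOne v) = (1/2) * |u.1 - v.1| + (3/2) * |u.2 - v.2| := by
      simp only [l1norm, wOne, Prod.fst_sub, Prod.snd_sub]
      rw [show -(1/2) * u.1 - 1 - (-(1/2) * v.1 - 1) = -(1/2) * (u.1 - v.1) by ring,
        show -(3/2) * u.2 + 1/4 - (-(3/2) * v.2 + 1/4) = -(3/2) * (u.2 - v.2) by ring,
        abs_mul, abs_mul]
      rw [show |(-(1/2) : ℝ)| = 1/2 by rw [abs_of_nonpos] <;> norm_num,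
        show |(-(3/2) : ℝ)| = 3/2 by rw [abs_of_nonpos] <;> norm_num]
    have h2 : l1norm (wTwo u - wTwo v) = (3/2) * |u.1 - v.1| + (1/4) * |u.2 - v.2| := by
      simp only [l1norm, wTwo, Prod.fst_sub, Prod.snd_sub]
      rw [show -(3/2) * u.1 + 1 - (-(3/2) * v.1 + 1) = -(3/2) * (u.1 - v.1) by ring,
        show (1/4) * u.2 + 3/8 - ((1/4) * v.2 + 3/8) = (1/4) * (u.2 - v.2) by ring,
        abs_mul, abs_mul]
      rw [show |(-(3/2) : ℝ)| = 3/2 by rw [abs_of_nonpos] <;> norm_num,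
        show |((1:ℝ)/4)| = 1/4 by rw [abs_of_nonneg] ; norm_num]
    have hl : l1norm (u - v) = |u.1 - v.1| + |u.2 - v.2| := rfl
    rw [h1, h2, hl, hsc]
    have := key_aux s |u.1 - v.1| |u.2 - v.2| hs0 hs1 (abs_nonneg _) (abs_nonneg _)
    linarith
  · have hu' : u ∉ Kone := by
      simp only [Ktwo, Set.mem_setOf_eq] at hu
      simp only [Kone, Set.mem_setOf_eq]; push_neg; linarith
    simp only [pOne, pTwo, pThree, pFour, Set.indicator_of_mem hu,
      Set.indicator_of_notMem hu', zero_mul, zero_add, add_zero]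
    set s := Real.sin (l1norm u) ^ 2 with hsdef
    have hsc : Real.cos (l1norm u) ^ 2 = 1 - s := by
      have := Real.sin_sq_add_cos_sq (l1norm u); linarith
    have hs0 : 0 ≤ s := sq_nonneg _
    have hs1 : s ≤ 1 := by
      have := sq_nonneg (Real.cos (l1norm u)); linarith
    have habs : abs (|u.1| - |v.1|) ≤ |u.1 - v.1| := abs_abs_sub_abs_le_abs_sub _ _
    have h3 : l1norm (wThree u - wThree v)
        ≤ (1/2) * |u.1 - v.1| + (3/2) * |u.2 - v.2| := by
      simp only [l1norm, wThree, Prod.fst_sub, Prod.snd_sub]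
      rw [show -(1/2) * |u.1| + 1 - (-(1/2) * |v.1| + 1) = -(1/2) * (|u.1| - |v.1|) by ring,
        show -(3/2) * u.2 - 1/4 - (-(3/2) * v.2 - 1/4) = -(3/2) * (u.2 - v.2) by ring,
        abs_mul, abs_mul]
      rw [show |(-(1/2) : ℝ)| = 1/2 by rw [abs_of_nonpos] <;> norm_num,
        show |(-(3/2) : ℝ)| = 3/2 by rw [abs_of_nonpos] <;> norm_num]
      linarith
    have h4 : l1norm (wFour u - wFour v)
        ≤ (3/2) * |u.1 - v.1| + (1/4) * |u.2 - v.2| := by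
      simp only [l1norm, wFour, Prod.fst_sub, Prod.snd_sub]
      rw [show (3/2) * |u.1| - 1 - ((3/2) * |v.1| - 1) = (3/2) * (|u.1| - |v.1|) by ring,
        show -(1/4) * u.2 + 3/8 - (-(1/4) * v.2 + 3/8) = -(1/4) * (u.2 - v.2) by ring,
        abs_mul, abs_mul]
      rw [show |((3:ℝ)/2)| = 3/2 by rw [abs_of_nonneg]; norm_num,
        show |(-(1/4) : ℝ)| = 1/4 by rw [abs_of_nonpos] <;> norm_num]
      linarith
    have hl : l1norm (u - v) = |u.1 - v.1| + |u.2 - v.2| := rfl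
    have hp3 : 0 ≤ (1:ℝ)/15 * s + 53/105 := by positivity
    have hp4 : 0 ≤ (1:ℝ)/15 * Real.cos (l1norm u) ^ 2 + 3/7 := by positivity
    calc (1/15 * s + 53/105) * l1norm (wThree u - wThree v)
          + (1/15 * Real.cos (l1norm u) ^ 2 + 3/7) * l1norm (wFour u - wFour v)
        ≤ (1/15 * s + 53/105) * ((1/2) * |u.1 - v.1| + (3/2) * |u.2 - v.2|)
          + (1/15 * Real.cos (l1norm u) ^ 2 + 3/7) * ((3/2) * |u.1 - v.1| + (1/4) * |u.2 - v.2|) := by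
          gcongr
      _ ≤ (209 / 210) * l1norm (u - v) := by
          rw [hl, hsc]
          have := key_aux s |u.1 - v.1| |u.2 - v.2| hs0 hs1 (abs_nonneg _) (abs_nonneg _)
          linarith
end

section
/- Let (K_{i(e)}, w_e, p_e)_{e∈E} be a contractive Markov system with average contracting rate 0 < a < 1 such that each p_e restricted to K_{i(e)} is Dini-continuous and p_e ≥ δ > 0 on K_{i(e)} for all e ∈ E. Then for every path (e_1,…,e_n) of the directed multigraph (i.e. t(e_k) = i(e_{k+1}) for 1 ≤ k < n), the function p(x) := p_{e_1}(x) · p_{e_2}(w_{e_1}x) ⋯ p_{e_n}(w_{e_{n−1}} ∘ ⋯ ∘ w_{e_1}x), restricted to K_{i(e_1)}, is bounded and Dini-continuous. -/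
open MeasureTheory Filter ENNReal

/-- `IsPath sys l` : the list of edges `l` is a directed path of the multigraph,
i.e. consecutive edges are composable: `t(e_k) = i(e_{k+1})`. -/
def MarkovSystem.IsPath {K : Type*} [MetricSpace K] [MeasurableSpace K]
    {N : ℕ} {E : Type*} [Fintype E] (sys : MarkovSystem K N E) : List E → Prop
  | [] => True
  | [_] => True
  | e :: e' :: l => sys.edgeT e = sys.edgeI e' ∧ MarkovSystem.IsPath sys (e' :: l)

section aux
variable {X : Type*} [PseudoMetricSpace X]

lemma le_modulus {h : X → ℝ} {x y : X} {t : ℝ} (hd : dist x y ≤ t) :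
    ENNReal.ofReal |h x - h y| ≤ modulus h t :=
  le_iSup_of_le x (le_iSup_of_le y (le_iSup_of_le hd le_rfl))

lemma modulus_le {h : X → ℝ} {t : ℝ} {M : ℝ≥0∞}
    (H : ∀ x y : X, dist x y ≤ t → ENNReal.ofReal |h x - h y| ≤ M) :
    modulus h t ≤ M :=
  iSup_le fun x => iSup_le fun y => iSup_le fun hd => H x y hd

lemma modulus_mono (h : X → ℝ) : Monotone (modulus h) := fun t t' htt' =>
  modulus_le fun _ _ hd => le_modulus (hd.trans htt')

lemma modulus_measurable (h : X → ℝ) : Measurable (modulus h) :=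
  (modulus_mono h).measurable

lemma DiniContinuous.mul {f g : X → ℝ} (hf : DiniContinuous f) (hg : DiniContinuous g)
    (hfb : ∀ x, |f x| ≤ 1) (hgb : ∀ x, |g x| ≤ 1) :
    DiniContinuous (fun x => f x * g x) := by
  obtain ⟨c₁, hc₁, hf⟩ := hf
  obtain ⟨c₂, hc₂, hg⟩ := hg
  refine ⟨min c₁ c₂, lt_min hc₁ hc₂, ?_⟩
  have key : ∀ t, modulus (fun x => f x * g x) t ≤ modulus f t + modulus g t := by
    intro t
    apply modulus_le
    intro x y hd
    have h1 : |f x * g x - f y * g y| ≤ |f x - f y| + |g x - g y| := by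
      have e1 : f x * g x - f y * g y = f x * (g x - g y) + (f x - f y) * g y := by ring
      rw [e1]
      calc |f x * (g x - g y) + (f x - f y) * g y|
          ≤ |f x * (g x - g y)| + |(f x - f y) * g y| := abs_add_le _ _
        _ = |f x| * |g x - g y| + |f x - f y| * |g y| := by rw [abs_mul, abs_mul]
        _ ≤ 1 * |g x - g y| + |f x - f y| * 1 := by
            gcongr; exacts [hfb x, hgb y]
        _ = |f x - f y| + |g x - g y| := by ring
    calc ENNReal.ofReal |f x * g x - f y * g y|
        ≤ ENNReal.ofReal (|f x - f y| + |g x - g y|) := ENNReal.ofReal_le_ofReal h1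
      _ ≤ ENNReal.ofReal |f x - f y| + ENNReal.ofReal |g x - g y| := ENNReal.ofReal_add_le
      _ ≤ modulus f t + modulus g t := add_le_add (le_modulus hd) (le_modulus hd)
  calc ∫⁻ t in Set.Ioc (0:ℝ) (min c₁ c₂), modulus (fun x => f x * g x) t / ENNReal.ofReal t
      ≤ ∫⁻ t in Set.Ioc (0:ℝ) (min c₁ c₂),
          (modulus f t / ENNReal.ofReal t + modulus g t / ENNReal.ofReal t) := by
        apply lintegral_mono
        intro t
        dsimp only
        rw [← ENNReal.add_div]
        exact ENNReal.div_le_div_right (key t) _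
    _ = (∫⁻ t in Set.Ioc (0:ℝ) (min c₁ c₂), modulus f t / ENNReal.ofReal t)
        + ∫⁻ t in Set.Ioc (0:ℝ) (min c₁ c₂), modulus g t / ENNReal.ofReal t :=
        lintegral_add_left ((modulus_measurable f).div ENNReal.measurable_ofReal) _
    _ < ⊤ := by
        apply ENNReal.add_lt_top.2
        constructor
        · exact lt_of_le_of_lt (lintegral_mono_set (Set.Ioc_subset_Ioc_right (min_le_left _ _))) hf
        · exact lt_of_le_of_lt (lintegral_mono_set (Set.Ioc_subset_Ioc_right (min_le_right _ _))) hg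

lemma DiniContinuous.comp_lipschitz {Y : Type*} [PseudoMetricSpace Y]
    {h : Y → ℝ} {u : X → Y} {L : ℝ} (hL : 0 < L)
    (hu : ∀ x y, dist (u x) (u y) ≤ L * dist x y)
    (hh : DiniContinuous h) : DiniContinuous (fun x => h (u x)) := by
  obtain ⟨c, hc, hint⟩ := hh
  refine ⟨c / L, div_pos hc hL, ?_⟩
  set g : ℝ → ℝ≥0∞ := fun s => modulus h s / ENNReal.ofReal s with hg
  have hgm : Measurable g := (modulus_measurable h).div ENNReal.measurable_ofReal
  have step1 : ∀ t : ℝ, modulus (fun x => h (u x)) t / ENNReal.ofReal t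
      ≤ ENNReal.ofReal L * g (L * t) := by
    intro t
    have hm : modulus (fun x => h (u x)) t ≤ modulus h (L * t) := by
      apply modulus_le
      intro x y hd
      exact le_modulus ((hu x y).trans (mul_le_mul_of_nonneg_left hd hL.le))
    calc modulus (fun x => h (u x)) t / ENNReal.ofReal t
        ≤ modulus h (L * t) / ENNReal.ofReal t := ENNReal.div_le_div_right hm _
      _ = ENNReal.ofReal L * g (L * t) := by
          rw [hg]
          dsimp only
          rw [ENNReal.ofReal_mul hL.le, ← mul_div_assoc,
            ENNReal.mul_div_mul_left _ _ (by simpa using hL) ENNReal.ofReal_ne_top]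
  have sub : ∫⁻ t in Set.Ioc (0:ℝ) (c / L), g (L * t)
      = ENNReal.ofReal |L⁻¹| * ∫⁻ s in Set.Ioc (0:ℝ) c, g s := by
    have hmap := Real.map_volume_mul_left (ne_of_gt hL)
    have := MeasureTheory.setLIntegral_map (μ := (volume : Measure ℝ))
      (s := Set.Ioc (0:ℝ) c) measurableSet_Ioc hgm (measurable_const_mul L)
    rw [hmap] at this
    rw [MeasureTheory.setLIntegral_smul_measure] at this
    have hpre : (fun x => L * x) ⁻¹' Set.Ioc (0:ℝ) c = Set.Ioc (0:ℝ) (c / L) := by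
      rw [Set.preimage_const_mul_Ioc₀ _ _ hL, zero_div]
    rw [hpre] at this
    exact this.symm
  calc ∫⁻ t in Set.Ioc (0:ℝ) (c / L), modulus (fun x => h (u x)) t / ENNReal.ofReal t
      ≤ ∫⁻ t in Set.Ioc (0:ℝ) (c / L), ENNReal.ofReal L * g (L * t) :=
        lintegral_mono fun t => step1 t
    _ = ENNReal.ofReal L * ∫⁻ t in Set.Ioc (0:ℝ) (c / L), g (L * t) :=
        lintegral_const_mul _ (hgm.comp (measurable_const_mul L))
    _ = ENNReal.ofReal L * (ENNReal.ofReal |L⁻¹| * ∫⁻ s in Set.Ioc (0:ℝ) c, g s) := by rw [sub]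
    _ < ⊤ := by
        apply ENNReal.mul_lt_top ENNReal.ofReal_lt_top
        exact ENNReal.mul_lt_top ENNReal.ofReal_lt_top hint

end aux

lemma wordProb_nonneg' {K E : Type*} (w : E → K → K) (p : E → K → ℝ)
    (hp : ∀ e x, 0 ≤ p e x) : ∀ (l : List E) (x : K), 0 ≤ wordProb w p l x
  | [], _ => zero_le_one
  | e :: l, x => mul_nonneg (hp e x) (wordProb_nonneg' w p hp l (w e x))

lemma wordProb_le_one' {K E : Type*} (w : E → K → K) (p : E → K → ℝ)
    (hp : ∀ e x, 0 ≤ p e x) (hp1 : ∀ e x, p e x ≤ 1) :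
    ∀ (l : List E) (x : K), wordProb w p l x ≤ 1
  | [], _ => le_refl 1
  | e :: l, x =>
    mul_le_one₀ (hp1 e x) (wordProb_nonneg' w p hp l (w e x))
      (wordProb_le_one' w p hp hp1 l (w e x))


/-- Along any directed path `(e₁, …, eₙ)`, the function
`p(x) = p_{e₁}(x) p_{e₂}(w_{e₁}x) ⋯ p_{eₙ}(w_{e_{n-1}} ∘ ⋯ ∘ w_{e₁}x)` restricted to
`K_{i(e₁)}` is bounded and Dini-continuous. -/
theorem wordProb_bounded_and_diniContinuous
    {K : Type*} [MetricSpace K] [MeasurableSpace K]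
    {N : ℕ} {E : Type*} [Fintype E]
    (sys : MarkovSystem K N E) (a : ℝ) (ha0 : 0 < a) (ha1 : a < 1)
    (hcontr : sys.ContractiveOnAvg a)
    (hdini : ∀ e, DiniContinuous fun x : sys.Ki (sys.edgeI e) => sys.p e (x : K))
    (δ : ℝ) (hδpos : 0 < δ)
    (hδ : ∀ e, ∀ x ∈ sys.Ki (sys.edgeI e), δ ≤ sys.p e x)
    (e₁ : E) (rest : List E) (hpath : sys.IsPath (e₁ :: rest)) :
    (∃ B, ∀ x : sys.Ki (sys.edgeI e₁), |wordProb sys.w sys.p (e₁ :: rest) (x : K)| ≤ B) ∧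
    DiniContinuous fun x : sys.Ki (sys.edgeI e₁) => wordProb sys.w sys.p (e₁ :: rest) (x : K)  := by
  have hp0 : ∀ e (x : K), 0 ≤ sys.p e x := sys.p_nonneg
  have hp1 : ∀ e (x : K), sys.p e x ≤ 1 := by
    intro e x
    calc sys.p e x ≤ ∑ e', sys.p e' x :=
          Finset.single_le_sum (fun e' _ => hp0 e' x) (Finset.mem_univ e)
      _ = 1 := sys.p_sum_one x
  have hwp0 := wordProb_nonneg' sys.w sys.p hp0
  have hwp1 := wordProb_le_one' sys.w sys.p hp0 hp1
  constructor
  · exact ⟨1, fun x => by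
      rw [abs_of_nonneg (hwp0 _ _)]; exact hwp1 _ _⟩
  · have hlip : ∀ e, ∀ x ∈ sys.Ki (sys.edgeI e), ∀ y ∈ sys.Ki (sys.edgeI e),
        dist (sys.w e x) (sys.w e y) ≤ (a / δ) * dist x y := by
      intro e x hx y hy
      have h1 : δ * dist (sys.w e x) (sys.w e y) ≤ a * dist x y := by
        calc δ * dist (sys.w e x) (sys.w e y)
            ≤ sys.p e x * dist (sys.w e x) (sys.w e y) :=
              mul_le_mul_of_nonneg_right (hδ e x hx) dist_nonneg
          _ ≤ ∑ e', sys.p e' x * dist (sys.w e' x) (sys.w e' y) :=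
              Finset.single_le_sum
                (f := fun e' => sys.p e' x * dist (sys.w e' x) (sys.w e' y))
                (fun e' _ => mul_nonneg (hp0 e' x) dist_nonneg) (Finset.mem_univ e)
          _ ≤ a * dist x y := hcontr (sys.edgeI e) x hx y hy
      rw [div_mul_eq_mul_div, le_div_iff₀ hδpos]
      calc dist (sys.w e x) (sys.w e y) * δ = δ * dist (sys.w e x) (sys.w e y) := mul_comm _ _
        _ ≤ a * dist x y := h1
    suffices H : ∀ (l : List E) (e : E), sys.IsPath (e :: l) →
        DiniContinuous fun x : sys.Ki (sys.edgeI e) => wordProb sys.w sys.p (e :: l) (x : K) from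
      H rest e₁ hpath
    intro l
    induction l with
    | nil =>
      intro e _
      simpa [wordProb] using hdini e
    | cons e' l' ih =>
      intro e hpath
      obtain ⟨hte, hpath'⟩ := hpath
      have hP := ih e' hpath'
      have hL : 0 < a / δ := div_pos ha0 hδpos
      set u : (sys.Ki (sys.edgeI e)) → (sys.Ki (sys.edgeI e')) :=
        fun x => ⟨sys.w e ↑x, hte ▸ sys.w_mapsTo e x.2⟩ with hu
      have hucontr : ∀ x y : sys.Ki (sys.edgeI e), dist (u x) (u y) ≤ (a / δ) * dist x y := by
        intro x y
        rw [Subtype.dist_eq, Subtype.dist_eq]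
        exact hlip e x x.2 y y.2
      have hg : DiniContinuous fun x : sys.Ki (sys.edgeI e) =>
          wordProb sys.w sys.p (e' :: l') (sys.w e ↑x) :=
        DiniContinuous.comp_lipschitz
          (h := fun y : sys.Ki (sys.edgeI e') => wordProb sys.w sys.p (e' :: l') (y : K))
          (u := u) hL hucontr hP
      have hf : DiniContinuous fun x : sys.Ki (sys.edgeI e) => sys.p e ↑x := hdini e
      have hb1 : ∀ x : sys.Ki (sys.edgeI e), |sys.p e ↑x| ≤ 1 := fun x => by
        rw [abs_of_nonneg (hp0 e ↑x)]; exact hp1 e ↑x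
      have hb2 : ∀ x : sys.Ki (sys.edgeI e),
          |wordProb sys.w sys.p (e' :: l') (sys.w e ↑x)| ≤ 1 := fun x => by
        rw [abs_of_nonneg (hwp0 _ _)]; exact hwp1 _ _
      simpa [wordProb] using hf.mul hg hb1 hb2
end
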